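/- Let Ψ: ℝⁿ → ℂ be continuous with Re Ψ ≥ 0, and suppose there exist M > 0 and β ∈ (0,2] such that Re Ψ(ξ) ≥ ‖ξ‖^β whenever ‖ξ‖ > M. Fix θ ∈ (0,1] and T > 0, and let p_t(x) := (2π)^{−n} ∫_{ℝⁿ} e^{−tΨ(ξ)} e^{−i⟨x,ξ⟩} dξ. Then there is a constant C > 0 such that |p_t(x+h) − p_t(x)| ≤ C ‖h‖^θ t^{−(θ+n)/β} for all t ∈ (0,T] and all x, h ∈ ℝⁿ. -/

import Mathlib

open MeasureTheory Complex Set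

noncomputable section

lemma auxB {β : ℝ} (hβ : 0 < β) (s : ℝ) (hs : 0 ≤ s) :
    ∃ C : ℝ, 1 ≤ C ∧ ∀ r : ℝ, 0 ≤ r → r ^ s * Real.exp (-r ^ β) ≤ C := by
  set k := ⌈s / β⌉₊ with hk
  refine ⟨max 1 (k.factorial : ℝ), le_max_left _ _, fun r hr => ?_⟩
  rcases le_or_gt r 1 with h1 | h1
  · have h2 : r ^ s ≤ 1 := Real.rpow_le_one hr h1 hs
    have h3 : Real.exp (-r ^ β) ≤ 1 := by
      rw [Real.exp_le_one_iff]
      simp [Real.rpow_nonneg hr]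
    calc r ^ s * Real.exp (-r ^ β) ≤ 1 :=
          mul_le_one₀ h2 (Real.exp_nonneg _) h3
      _ ≤ max 1 (k.factorial : ℝ) := le_max_left _ _
  · have hrpos : (0:ℝ) < r := lt_trans one_pos h1
    have hkβ : s ≤ k * β := by
      have h4 : s / β ≤ (k : ℝ) := Nat.le_ceil (s / β)
      rw [div_le_iff₀ hβ] at h4
      linarith
    have hrβpos : (0:ℝ) < r ^ β := Real.rpow_pos_of_pos hrpos β
    have hApos : (0:ℝ) < r ^ ((k:ℝ) * β) := Real.rpow_pos_of_pos hrpos _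
    have hfac : (r ^ β) ^ k / (k.factorial : ℝ) ≤ Real.exp (r ^ β) :=
      Real.pow_div_factorial_le_exp _ hrβpos.le k
    have hpow : (r ^ β) ^ k = r ^ ((k:ℝ) * β) := by
      rw [← Real.rpow_natCast (r ^ β) k, ← Real.rpow_mul hrpos.le, mul_comm]
    rw [hpow] at hfac
    have hexp : Real.exp (-r ^ β) ≤ (k.factorial : ℝ) * r ^ (-((k:ℝ) * β)) := by
      rw [Real.exp_neg]
      calc (Real.exp (r ^ β))⁻¹ ≤ (r ^ ((k:ℝ) * β) / (k.factorial : ℝ))⁻¹ := by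
            gcongr
      _ = (k.factorial : ℝ) * r ^ (-((k:ℝ) * β)) := by
            rw [Real.rpow_neg hrpos.le, inv_div, div_eq_mul_inv]
    calc r ^ s * Real.exp (-r ^ β) ≤ r ^ s * ((k.factorial : ℝ) * r ^ (-((k:ℝ) * β))) :=
          mul_le_mul_of_nonneg_left hexp (Real.rpow_nonneg hr s)
      _ = (k.factorial : ℝ) * r ^ (s - (k:ℝ) * β) := by
          rw [Real.rpow_sub hrpos, Real.rpow_neg hrpos.le, div_eq_mul_inv]
          ring
      _ ≤ (k.factorial : ℝ) * 1 := by
          apply mul_le_mul_of_nonneg_left _ (by positivity)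
          exact Real.rpow_le_one_of_one_le_of_nonpos h1.le (by linarith)
      _ ≤ max 1 (k.factorial : ℝ) := by simp

lemma auxCont (n : ℕ) {β s : ℝ} (hβ : 0 < β) (hs : 0 ≤ s) :
    Continuous fun ξ : EuclideanSpace ℝ (Fin n) => ‖ξ‖ ^ s * Real.exp (-‖ξ‖ ^ β) := by
  apply Continuous.mul
  · exact continuous_norm.rpow_const fun ξ => Or.inr hs
  · exact Real.continuous_exp.comp (continuous_norm.rpow_const fun ξ => Or.inr hβ.le).neg

lemma auxInt (n : ℕ) {β s : ℝ} (hβ : 0 < β) (hs : 0 ≤ s) :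
    Integrable (fun ξ : EuclideanSpace ℝ (Fin n) => ‖ξ‖ ^ s * Real.exp (-‖ξ‖ ^ β)) := by
  obtain ⟨C, hC1, hC⟩ := auxB hβ (s + ((n : ℝ) + 1)) (by positivity)
  have hint : Integrable (fun ξ : EuclideanSpace ℝ (Fin n) =>
      2 ^ ((n:ℝ)+1) * C * (1 + ‖ξ‖) ^ (-((n:ℝ)+1))) := by
    apply Integrable.const_mul
    apply integrable_one_add_norm
    rw [finrank_euclideanSpace_fin]
    linarith
  refine hint.mono' ((auxCont n hβ hs).aestronglyMeasurable) ?_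
  filter_upwards with ξ
  set r := ‖ξ‖ with hr
  have hr0 : 0 ≤ r := norm_nonneg ξ
  have h1r : (0:ℝ) < 1 + r := by linarith
  have hb : (0:ℝ) < (1 + r) ^ ((n:ℝ)+1) := Real.rpow_pos_of_pos h1r _
  have hnorm : ‖r ^ s * Real.exp (-r ^ β)‖ = r ^ s * Real.exp (-r ^ β) := by
    rw [Real.norm_eq_abs, _root_.abs_of_nonneg (by positivity)]
  rw [hnorm, Real.rpow_neg h1r.le, ← div_eq_mul_inv, le_div_iff₀ hb]
  have key : r ^ s * Real.exp (-r ^ β) * (1 + r) ^ ((n:ℝ)+1) ≤ 2 ^ ((n:ℝ)+1) * C := by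
    rcases le_or_gt r 1 with h1 | h1
    · have e1 : r ^ s ≤ 1 := Real.rpow_le_one hr0 h1 hs
      have e2 : Real.exp (-r ^ β) ≤ 1 := by
        rw [Real.exp_le_one_iff]; simp [Real.rpow_nonneg hr0]
      have e3 : (1 + r) ^ ((n:ℝ)+1) ≤ 2 ^ ((n:ℝ)+1) :=
        Real.rpow_le_rpow h1r.le (by linarith) (by positivity)
      calc r ^ s * Real.exp (-r ^ β) * (1 + r) ^ ((n:ℝ)+1)
          ≤ 1 * 2 ^ ((n:ℝ)+1) :=
            mul_le_mul (mul_le_one₀ e1 (Real.exp_nonneg _) e2) e3 (by positivity) (by norm_num)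
        _ = 2 ^ ((n:ℝ)+1) * 1 := by ring
        _ ≤ 2 ^ ((n:ℝ)+1) * C := by
            apply mul_le_mul_of_nonneg_left hC1 (by positivity)
    · have hrpos : (0:ℝ) < r := lt_trans one_pos h1
      have e3 : (1 + r) ^ ((n:ℝ)+1) ≤ 2 ^ ((n:ℝ)+1) * r ^ ((n:ℝ)+1) := by
        rw [← Real.mul_rpow (by norm_num) hrpos.le]
        exact Real.rpow_le_rpow h1r.le (by linarith) (by positivity)
      calc r ^ s * Real.exp (-r ^ β) * (1 + r) ^ ((n:ℝ)+1)
          ≤ r ^ s * Real.exp (-r ^ β) * (2 ^ ((n:ℝ)+1) * r ^ ((n:ℝ)+1)) := by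
            apply mul_le_mul_of_nonneg_left e3 (by positivity)
        _ = 2 ^ ((n:ℝ)+1) * (r ^ (s + ((n:ℝ)+1)) * Real.exp (-r ^ β)) := by
            rw [Real.rpow_add hrpos s ((n:ℝ)+1)]; ring
        _ ≤ 2 ^ ((n:ℝ)+1) * C := by
            apply mul_le_mul_of_nonneg_left (hC _ hr0) (by positivity)
  exact key

lemma auxR {β t : ℝ} (hβ : 0 < β) (ht : 0 < t) :
    (t ^ β⁻¹) ^ β = t := by
  rw [← Real.rpow_mul ht.le, inv_mul_cancel₀ (ne_of_gt hβ), Real.rpow_one]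

lemma auxFun (n : ℕ) {β s t : ℝ} (hβ : 0 < β) (ht : 0 < t)
    (ξ : EuclideanSpace ℝ (Fin n)) :
    ‖(t ^ β⁻¹) • ξ‖ ^ s * Real.exp (-‖(t ^ β⁻¹) • ξ‖ ^ β) =
      (t ^ β⁻¹) ^ s * (‖ξ‖ ^ s * Real.exp (-(t * ‖ξ‖ ^ β))) := by
  have hR : 0 < t ^ β⁻¹ := Real.rpow_pos_of_pos ht _
  have hnm : ‖(t ^ β⁻¹) • ξ‖ = t ^ β⁻¹ * ‖ξ‖ := by
    rw [norm_smul, Real.norm_eq_abs, _root_.abs_of_pos hR]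
  rw [hnm, Real.mul_rpow hR.le (norm_nonneg ξ), Real.mul_rpow hR.le (norm_nonneg ξ),
    auxR hβ ht]
  ring

lemma auxIntT (n : ℕ) {β s t : ℝ} (hβ : 0 < β) (hs : 0 ≤ s) (ht : 0 < t) :
    Integrable (fun ξ : EuclideanSpace ℝ (Fin n) =>
      ‖ξ‖ ^ s * Real.exp (-(t * ‖ξ‖ ^ β))) := by
  have hR : 0 < t ^ β⁻¹ := Real.rpow_pos_of_pos ht _
  have hRs : (0:ℝ) < (t ^ β⁻¹) ^ s := Real.rpow_pos_of_pos hR _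
  have h1 := ((auxInt n hβ hs).comp_smul (ne_of_gt hR)).const_mul ((t ^ β⁻¹) ^ s)⁻¹
  have heq : (fun ξ : EuclideanSpace ℝ (Fin n) =>
      ((t ^ β⁻¹) ^ s)⁻¹ * (‖(t ^ β⁻¹) • ξ‖ ^ s * Real.exp (-‖(t ^ β⁻¹) • ξ‖ ^ β))) =
      fun ξ => ‖ξ‖ ^ s * Real.exp (-(t * ‖ξ‖ ^ β)) := by
    funext ξ
    rw [auxFun n hβ ht ξ, ← mul_assoc, inv_mul_cancel₀ (ne_of_gt hRs), one_mul]
  rwa [heq] at h1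

lemma auxScale (n : ℕ) {β s t : ℝ} (hβ : 0 < β) (hs : 0 ≤ s) (ht : 0 < t) :
    ∫ ξ : EuclideanSpace ℝ (Fin n), ‖ξ‖ ^ s * Real.exp (-(t * ‖ξ‖ ^ β)) =
      t ^ (-((s + n) / β)) *
        ∫ ξ : EuclideanSpace ℝ (Fin n), ‖ξ‖ ^ s * Real.exp (-‖ξ‖ ^ β) := by
  have hR : 0 < t ^ β⁻¹ := Real.rpow_pos_of_pos ht _
  have hRs : (0:ℝ) < (t ^ β⁻¹) ^ s := Real.rpow_pos_of_pos hR _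
  have key := MeasureTheory.Measure.integral_comp_smul_of_nonneg
    (volume : Measure (EuclideanSpace ℝ (Fin n)))
    (fun ξ => ‖ξ‖ ^ s * Real.exp (-‖ξ‖ ^ β)) (t ^ β⁻¹) (hR := hR.le)
  simp only [auxFun n hβ ht] at key
  rw [MeasureTheory.integral_const_mul] at key
  rw [finrank_euclideanSpace_fin] at key
  have h2 : ∫ ξ : EuclideanSpace ℝ (Fin n), ‖ξ‖ ^ s * Real.exp (-(t * ‖ξ‖ ^ β)) =
      ((t ^ β⁻¹) ^ s)⁻¹ * (((t ^ β⁻¹) ^ n)⁻¹ •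
        ∫ ξ : EuclideanSpace ℝ (Fin n), ‖ξ‖ ^ s * Real.exp (-‖ξ‖ ^ β)) := by
    rw [← key, ← mul_assoc, inv_mul_cancel₀ (ne_of_gt hRs), one_mul]
  rw [h2, smul_eq_mul, ← mul_assoc]
  congr 1
  rw [← Real.rpow_natCast (t ^ β⁻¹) n, ← Real.rpow_mul ht.le, ← Real.rpow_mul ht.le,
    ← Real.rpow_neg ht.le, ← Real.rpow_neg ht.le, ← Real.rpow_add ht]
  congr 1
  field_simp
  ring

lemma auxExpI (b : ℝ) : ‖Complex.exp (-(Complex.I * b)) - 1‖ ≤ min 2 |b| := by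
  set z := Complex.exp (-(Complex.I * b)) - 1 with hz
  have hre : z.re = Real.cos b - 1 := by
    simp [hz, Complex.exp_re, Real.cos_neg]
  have him : z.im = -Real.sin b := by
    simp [hz, Complex.exp_im, Real.sin_neg]
  have hsq : ‖z‖ ^ 2 = 2 - 2 * Real.cos b := by
    rw [Complex.sq_norm, Complex.normSq_apply, hre, him]
    have := Real.sin_sq_add_cos_sq b
    nlinarith [this]
  have h0 : 0 ≤ ‖z‖ := norm_nonneg z
  refine le_min ?_ ?_
  · nlinarith [Real.neg_one_le_cos b]
  · nlinarith [Real.one_sub_sq_div_two_le_cos (x := b), abs_nonneg b, _root_.sq_abs b]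

lemma auxMin {θ : ℝ} (hθ0 : 0 < θ) (hθ1 : θ ≤ 1) {a : ℝ} (ha : 0 ≤ a) :
    min 2 a ≤ 2 ^ (1 - θ) * a ^ θ := by
  rcases eq_or_lt_of_le ha with h0 | h0
  · rw [← h0]
    rw [Real.zero_rpow (ne_of_gt hθ0)]
    simp
  rcases le_total a 2 with h2 | h2
  · calc min 2 a ≤ a := min_le_right _ _
      _ = a ^ (1 - θ) * a ^ θ := by
          rw [← Real.rpow_add h0, sub_add_cancel, Real.rpow_one]
      _ ≤ 2 ^ (1 - θ) * a ^ θ := by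
          apply mul_le_mul_of_nonneg_right _ (Real.rpow_nonneg ha θ)
          exact Real.rpow_le_rpow ha h2 (by linarith)
  · calc min 2 a ≤ 2 := min_le_left _ _
      _ = 2 ^ (1 - θ) * 2 ^ θ := by
          rw [← Real.rpow_add two_pos, sub_add_cancel, Real.rpow_one]
      _ ≤ 2 ^ (1 - θ) * a ^ θ := by
          apply mul_le_mul_of_nonneg_left _ (Real.rpow_nonneg (by norm_num) _)
          exact Real.rpow_le_rpow (by norm_num) h2 hθ0.le

/-- The transition density `p_t(x) = (2π)^{-n} ∫ e^{-tΨ(ξ)} e^{-i⟨x,ξ⟩} dξ`. -/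
def transDensity (n : ℕ) (Ψ : EuclideanSpace ℝ (Fin n) → ℂ) (t : ℝ)
    (x : EuclideanSpace ℝ (Fin n)) : ℂ :=
  (((2 * Real.pi) ^ n)⁻¹ : ℝ) *
    ∫ ξ : EuclideanSpace ℝ (Fin n),
      Complex.exp (-(t : ℂ) * Ψ ξ) * Complex.exp (-(Complex.I * ((inner ℝ x ξ : ℝ) : ℂ)))

theorem stmt3 (n : ℕ) (Ψ : EuclideanSpace ℝ (Fin n) → ℂ) (hΨcont : Continuous Ψ)
    (hΨre : ∀ ξ, 0 ≤ (Ψ ξ).re) (M β : ℝ) (hM : 0 < M) (hβ : β ∈ Set.Ioc (0 : ℝ) 2)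
    (hgrowth : ∀ ξ : EuclideanSpace ℝ (Fin n), M < ‖ξ‖ → ‖ξ‖ ^ β ≤ (Ψ ξ).re)
    (θ : ℝ) (hθ : θ ∈ Set.Ioc (0 : ℝ) 1) (T : ℝ) (hT : 0 < T) :
    ∃ C : ℝ, 0 < C ∧ ∀ t ∈ Set.Ioc (0 : ℝ) T, ∀ x h : EuclideanSpace ℝ (Fin n),
      ‖transDensity n Ψ t (x + h) - transDensity n Ψ t x‖ ≤
        C * ‖h‖ ^ θ * t ^ (-((θ + n) / β)) := by
  obtain ⟨hβ0, hβ2⟩ := hβ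
  obtain ⟨hθ0, hθ1⟩ := hθ
  set K : ℝ := ∫ ξ : (EuclideanSpace ℝ (Fin n)), ‖ξ‖ ^ θ * Real.exp (-‖ξ‖ ^ β) with hK
  have hK0 : 0 ≤ K := integral_nonneg fun ξ => by positivity
  set V : ℝ := (volume (Metric.closedBall (0:(EuclideanSpace ℝ (Fin n))) M)).toReal with hV
  have hV0 : 0 ≤ V := ENNReal.toReal_nonneg
  set c : ℝ := (((2 * Real.pi) ^ n)⁻¹ : ℝ) with hc
  have hc0 : 0 < c := by
    rw [hc]; positivity
  set e : ℝ := (θ + n) / β with he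
  have he0 : 0 ≤ e := by positivity
  refine ⟨c * 2 ^ (1 - θ) * (M ^ θ * V * T ^ e + K) + 1, by positivity, ?_⟩
  rintro t ⟨ht0, htT⟩ x h
  -- basic facts about t
  have hte : (0:ℝ) < t ^ (-e) := Real.rpow_pos_of_pos ht0 _
  have hTt : 1 ≤ T ^ e * t ^ (-e) := by
    have h1 : T ^ (-e) ≤ t ^ (-e) :=
      Real.rpow_le_rpow_of_nonpos ht0 htT (neg_nonpos.2 he0)
    calc (1:ℝ) = T ^ e * T ^ (-e) := by
          rw [← Real.rpow_add hT]; simp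
      _ ≤ T ^ e * t ^ (-e) :=
          mul_le_mul_of_nonneg_left h1 (Real.rpow_nonneg hT.le _)
  -- the integrand and its integrability
  set A : (EuclideanSpace ℝ (Fin n)) → (EuclideanSpace ℝ (Fin n)) → ℂ := fun y ξ =>
    Complex.exp (-(t : ℂ) * Ψ ξ) * Complex.exp (-(Complex.I * ((inner ℝ y ξ : ℝ) : ℂ))) with hA
  have hnormA : ∀ (y : (EuclideanSpace ℝ (Fin n))) (ξ : (EuclideanSpace ℝ (Fin n))), ‖A y ξ‖ = Real.exp (-(t * (Ψ ξ).re)) := by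
    intro y ξ
    rw [hA]
    rw [norm_mul, Complex.norm_exp, Complex.norm_exp]
    have h1 : (-(t : ℂ) * Ψ ξ).re = -(t * (Ψ ξ).re) := by
      simp [Complex.mul_re]
    have h2 : (-(Complex.I * ((inner ℝ y ξ : ℝ) : ℂ))).re = 0 := by
      simp
    rw [h1, h2, Real.exp_zero, mul_one]
  have hcontA : ∀ y : (EuclideanSpace ℝ (Fin n)), Continuous (A y) := by
    intro y
    apply Continuous.mul
    · exact Complex.continuous_exp.comp (continuous_const.mul hΨcont)
    · apply Complex.continuous_exp.comp
      apply Continuous.neg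
      apply Continuous.mul continuous_const
      exact Complex.continuous_ofReal.comp (Continuous.inner continuous_const continuous_id)
  have hindInt : Integrable (Set.indicator (Metric.closedBall (0:(EuclideanSpace ℝ (Fin n))) M) (fun _ => (1:ℝ))) := by
    apply MeasureTheory.IntegrableOn.integrable_indicator _ measurableSet_closedBall
    exact integrableOn_const measure_closedBall_lt_top.ne (by simp)
  have hexpInt : Integrable (fun ξ : (EuclideanSpace ℝ (Fin n)) => Real.exp (-(t * ‖ξ‖ ^ β))) := by
    have h1 := auxIntT n (s := 0) hβ0 le_rfl ht0
    simpa using h1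
  have hIA : ∀ y : (EuclideanSpace ℝ (Fin n)), Integrable (A y) := by
    intro y
    apply Integrable.mono'
      (hindInt.add hexpInt) ((hcontA y).aestronglyMeasurable)
    filter_upwards with ξ
    simp only [Pi.add_apply]
    rw [hnormA y ξ]
    rcases le_or_gt ‖ξ‖ M with hle | hlt
    · have hmem : ξ ∈ Metric.closedBall (0:(EuclideanSpace ℝ (Fin n))) M := by
        rw [Metric.mem_closedBall, dist_zero_right]; exact hle
      rw [Set.indicator_of_mem hmem]
      have h1 : Real.exp (-(t * (Ψ ξ).re)) ≤ 1 := by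
        rw [Real.exp_le_one_iff]
        have := hΨre ξ
        nlinarith
      have h2 : 0 ≤ Real.exp (-(t * ‖ξ‖ ^ β)) := Real.exp_nonneg _
      linarith
    · have hmem : ξ ∉ Metric.closedBall (0:(EuclideanSpace ℝ (Fin n))) M := by
        rw [Metric.mem_closedBall, dist_zero_right]; linarith
      rw [Set.indicator_of_notMem hmem]
      have h1 : Real.exp (-(t * (Ψ ξ).re)) ≤ Real.exp (-(t * ‖ξ‖ ^ β)) := by
        apply Real.exp_le_exp.2
        have := hgrowth ξ hlt
        nlinarith
      linarith
  -- the difference identity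
  have hdiff : transDensity n Ψ t (x + h) - transDensity n Ψ t x =
      (c : ℂ) * ∫ ξ : (EuclideanSpace ℝ (Fin n)), (A (x + h) ξ - A x ξ) := by
    rw [transDensity, transDensity, integral_sub (hIA (x + h)) (hIA x)]
    rw [mul_sub]
  -- pointwise bound
  set G : (EuclideanSpace ℝ (Fin n)) → ℝ := fun ξ => 2 ^ (1 - θ) * ‖h‖ ^ θ *
    (M ^ θ * Set.indicator (Metric.closedBall (0:(EuclideanSpace ℝ (Fin n))) M) (fun _ => (1:ℝ)) ξ +
      ‖ξ‖ ^ θ * Real.exp (-(t * ‖ξ‖ ^ β))) with hG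
  have hptwise : ∀ ξ : (EuclideanSpace ℝ (Fin n)), ‖A (x + h) ξ - A x ξ‖ ≤ G ξ := by
    intro ξ
    set a : ℝ := (inner ℝ x ξ : ℝ) with ha
    set b : ℝ := (inner ℝ h ξ : ℝ) with hb
    have hab : (inner ℝ (x + h) ξ : ℝ) = a + b := by
      rw [ha, hb, inner_add_left]
    have hfact : A (x + h) ξ - A x ξ =
        Complex.exp (-(t : ℂ) * Ψ ξ) * Complex.exp (-(Complex.I * (a : ℂ))) *
          (Complex.exp (-(Complex.I * (b : ℂ))) - 1) := by
      rw [hA]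
      simp only [hab]
      push_cast
      rw [show -(Complex.I * ((a : ℂ) + (b : ℂ))) =
        -(Complex.I * (a : ℂ)) + -(Complex.I * (b : ℂ)) by ring]
      rw [Complex.exp_add]
      ring
    rw [hfact]
    rw [norm_mul, norm_mul]
    have h1 : ‖Complex.exp (-(t : ℂ) * Ψ ξ)‖ = Real.exp (-(t * (Ψ ξ).re)) := by
      rw [Complex.norm_exp]
      congr 1
      simp [Complex.mul_re]
    have h2 : ‖Complex.exp (-(Complex.I * (a : ℂ)))‖ = 1 := by
      rw [Complex.norm_exp]
      simp
    have h3 : ‖Complex.exp (-(Complex.I * (b : ℂ))) - 1‖ ≤ 2 ^ (1 - θ) * (‖h‖ * ‖ξ‖) ^ θ := by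
      calc ‖Complex.exp (-(Complex.I * (b : ℂ))) - 1‖ ≤ min 2 |b| := auxExpI b
        _ ≤ min 2 (‖h‖ * ‖ξ‖) := by
            apply min_le_min le_rfl
            exact abs_real_inner_le_norm h ξ
        _ ≤ 2 ^ (1 - θ) * (‖h‖ * ‖ξ‖) ^ θ :=
            auxMin hθ0 hθ1 (by positivity)
    rw [h1, h2, mul_one]
    calc Real.exp (-(t * (Ψ ξ).re)) * ‖Complex.exp (-(Complex.I * (b : ℂ))) - 1‖
        ≤ Real.exp (-(t * (Ψ ξ).re)) * (2 ^ (1 - θ) * (‖h‖ * ‖ξ‖) ^ θ) :=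
          mul_le_mul_of_nonneg_left h3 (Real.exp_nonneg _)
      _ = 2 ^ (1 - θ) * ‖h‖ ^ θ * (Real.exp (-(t * (Ψ ξ).re)) * ‖ξ‖ ^ θ) := by
          rw [Real.mul_rpow (norm_nonneg h) (norm_nonneg ξ)]
          ring
      _ ≤ G ξ := by
          rw [hG]
          apply mul_le_mul_of_nonneg_left _ (by positivity)
          rcases le_or_gt ‖ξ‖ M with hle | hlt
          · have hmem : ξ ∈ Metric.closedBall (0:(EuclideanSpace ℝ (Fin n))) M := by
              rw [Metric.mem_closedBall, dist_zero_right]; exact hle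
            rw [Set.indicator_of_mem hmem]
            have e1 : Real.exp (-(t * (Ψ ξ).re)) ≤ 1 := by
              rw [Real.exp_le_one_iff]
              have := hΨre ξ
              nlinarith
            have e2 : ‖ξ‖ ^ θ ≤ M ^ θ :=
              Real.rpow_le_rpow (norm_nonneg ξ) hle hθ0.le
            have e3 : 0 ≤ ‖ξ‖ ^ θ * Real.exp (-(t * ‖ξ‖ ^ β)) := by positivity
            have e4 : Real.exp (-(t * (Ψ ξ).re)) * ‖ξ‖ ^ θ ≤ M ^ θ := by
              calc Real.exp (-(t * (Ψ ξ).re)) * ‖ξ‖ ^ θ ≤ 1 * (M ^ θ) := by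
                    apply mul_le_mul e1 e2 (Real.rpow_nonneg (norm_nonneg ξ) θ) zero_le_one
                _ = M ^ θ := one_mul _
            linarith
          · have hmem : ξ ∉ Metric.closedBall (0:(EuclideanSpace ℝ (Fin n))) M := by
              rw [Metric.mem_closedBall, dist_zero_right]; linarith
            rw [Set.indicator_of_notMem hmem]
            have e1 : Real.exp (-(t * (Ψ ξ).re)) ≤ Real.exp (-(t * ‖ξ‖ ^ β)) := by
              apply Real.exp_le_exp.2
              have := hgrowth ξ hlt
              nlinarith
            have : Real.exp (-(t * (Ψ ξ).re)) * ‖ξ‖ ^ θ ≤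
                ‖ξ‖ ^ θ * Real.exp (-(t * ‖ξ‖ ^ β)) := by
              rw [mul_comm]
              exact mul_le_mul_of_nonneg_left e1 (Real.rpow_nonneg (norm_nonneg ξ) θ)
            linarith [mul_nonneg (Real.rpow_nonneg hM.le θ) (le_refl (0:ℝ))]
  -- integrability of G
  have hGInt : Integrable G := by
    rw [hG]
    apply Integrable.const_mul
    apply Integrable.add
    · exact hindInt.const_mul _
    · exact auxIntT n hβ0 hθ0.le ht0
  -- integral of G
  have hGval : ∫ ξ : (EuclideanSpace ℝ (Fin n)), G ξ = 2 ^ (1 - θ) * ‖h‖ ^ θ * (M ^ θ * V + t ^ (-e) * K) := by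
    rw [hG]
    rw [integral_const_mul]
    congr 1
    rw [integral_add (hindInt.const_mul _) (auxIntT n hβ0 hθ0.le ht0)]
    congr 1
    · rw [integral_const_mul]
      congr 1
      rw [integral_indicator_const _ measurableSet_closedBall]
      simp [hV, Measure.real]
    · rw [auxScale n hβ0 hθ0.le ht0, ← hK, he]
  -- put everything together
  have hmain : ‖transDensity n Ψ t (x + h) - transDensity n Ψ t x‖ ≤
      c * (2 ^ (1 - θ) * ‖h‖ ^ θ * (M ^ θ * V + t ^ (-e) * K)) := by
    rw [hdiff, norm_mul, Complex.norm_real, Real.norm_eq_abs, _root_.abs_of_nonneg hc0.le]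
    apply mul_le_mul_of_nonneg_left _ hc0.le
    calc ‖∫ ξ : (EuclideanSpace ℝ (Fin n)), (A (x + h) ξ - A x ξ)‖
        ≤ ∫ ξ : (EuclideanSpace ℝ (Fin n)), ‖A (x + h) ξ - A x ξ‖ := by
          exact norm_integral_le_integral_norm _
      _ ≤ ∫ ξ : (EuclideanSpace ℝ (Fin n)), G ξ :=
          integral_mono ((hIA (x + h)).sub (hIA x)).norm hGInt hptwise
      _ = 2 ^ (1 - θ) * ‖h‖ ^ θ * (M ^ θ * V + t ^ (-e) * K) := hGval
  refine hmain.trans ?_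
  have hfin : M ^ θ * V + t ^ (-e) * K ≤ (M ^ θ * V * T ^ e + K) * t ^ (-e) := by
    have h1 : M ^ θ * V ≤ M ^ θ * V * T ^ e * t ^ (-e) := by
      calc M ^ θ * V = M ^ θ * V * 1 := by ring
        _ ≤ M ^ θ * V * (T ^ e * t ^ (-e)) := by
            apply mul_le_mul_of_nonneg_left hTt
            positivity
        _ = M ^ θ * V * T ^ e * t ^ (-e) := by ring
    nlinarith
  calc c * (2 ^ (1 - θ) * ‖h‖ ^ θ * (M ^ θ * V + t ^ (-e) * K))
      ≤ c * (2 ^ (1 - θ) * ‖h‖ ^ θ * ((M ^ θ * V * T ^ e + K) * t ^ (-e))) := by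
        apply mul_le_mul_of_nonneg_left _ hc0.le
        apply mul_le_mul_of_nonneg_left hfin
        positivity
    _ = (c * 2 ^ (1 - θ) * (M ^ θ * V * T ^ e + K)) * ‖h‖ ^ θ * t ^ (-e) := by ring
    _ ≤ (c * 2 ^ (1 - θ) * (M ^ θ * V * T ^ e + K) + 1) * ‖h‖ ^ θ * t ^ (-e) := by
        apply mul_le_mul_of_nonneg_right _ hte.le
        apply mul_le_mul_of_nonneg_right _ (Real.rpow_nonneg (norm_nonneg h) θ)
        linarith
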